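/- arXiv:1707.05298 — 9 statements merged into one kernel-verified Lean document; each statement's English description precedes it below -/
import Mathlib

section
/- With the hitting-times setup below, the limit lim_{i→∞} [(t_{2i+1} − t_{2i}) − γ₂·(t_{2i} − t_{2i−1})] exists and equals −(1/E₁)·log a. (Lemma 6.1(1): the sojourn time near the first saddle-focus is asymptotically γ₂ times the previous sojourn time near the second one, up to the constant −(1/E₁)·log a.) -/
open Real Filter Topology

/-- Hitting-times setup for an orbit in the basin of a Bykov attractor:
`z i` and `ρ i` are the height and radial coordinates of the successive hits
at the cross sections, and `t` is the sequence of hitting times. -/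
theorem stmt_0
    (C₁ E₁ C₂ E₂ a ε M : ℝ)
    (hC₁ : C₁ > E₁) (hE₁ : E₁ > 0) (hC₂ : C₂ > E₂) (hE₂ : E₂ > 0)
    (ha : a ∈ Set.Ioo (0:ℝ) 1) (hε : ε ∈ Set.Ioo (0:ℝ) 1) (hM : M > 0)
    (z ρ S U t : ℕ → ℝ)
    (hz01 : ∀ i, z i ∈ Set.Ioo (0:ℝ) 1) (hρ01 : ∀ i, ρ i ∈ Set.Ioo (0:ℝ) 1)
    (hzlim : Tendsto z atTop (𝓝 0))
    (hρdef : ∀ i, ρ i = (a * z i) ^ (C₁/E₁) + S i)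
    (hS : ∀ i, |S i| ≤ M * (a * z i) ^ ((C₁/E₁) * (1+ε)))
    (hzdef : ∀ i, z (i+1) = (ρ i) ^ (C₂/E₂) + U i)
    (hU : ∀ i, |U i| ≤ M * (ρ i) ^ ((C₂/E₂) * (1+ε)))
    (ht0 : t 0 = 0)
    (htodd : ∀ i, t (2*i+1) - t (2*i) = -(1/E₁) * Real.log (a * z i))
    (hteven : ∀ i, t (2*i+2) - t (2*i+1) = -(1/E₂) * Real.log (ρ i)) :
    Tendsto (fun i => (t (2*i+1) - t (2*i)) - (C₂/E₁) * (t (2*i) - t (2*i-1)))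
      atTop (𝓝 (-(1/E₁) * Real.log a)) := by

  obtain ⟨ha0, ha1⟩ := ha
  obtain ⟨hε0, hε1⟩ := hε
  have hδ₂ : (0:ℝ) < C₂/E₂ := div_pos (lt_trans hE₂ hC₂) hE₂
  have hδ₁ : (0:ℝ) < C₁/E₁ := div_pos (lt_trans hE₁ hC₁) hE₁
  have hzpos : ∀ i, 0 < z i := fun i => (hz01 i).1
  have hρpos : ∀ i, 0 < ρ i := fun i => (hρ01 i).1
  have hazlim : Tendsto (fun i => a * z i) atTop (𝓝 0) := by
    simpa using hzlim.const_mul a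
  have rpow_lim : ∀ p : ℝ, 0 < p → Tendsto (fun i => (a * z i) ^ p) atTop (𝓝 0) := by
    intro p hp
    have h := (Real.continuousAt_rpow_const 0 p (Or.inr hp.le)).tendsto.comp hazlim
    simpa [Function.comp_def, Real.zero_rpow hp.ne'] using h
  have hρlim : Tendsto ρ atTop (𝓝 0) := by
    have hub : ∀ i, ρ i ≤ (a*z i) ^ (C₁/E₁) + M * (a*z i) ^ ((C₁/E₁)*(1+ε)) := by
      intro i
      rw [hρdef i]
      have := (abs_le.mp (hS i)).2
      linarith
    have hlb : ∀ i, (0:ℝ) ≤ ρ i := fun i => (hρpos i).le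
    have h1 := rpow_lim (C₁/E₁) hδ₁
    have h2 := (rpow_lim ((C₁/E₁)*(1+ε)) (by positivity)).const_mul M
    have hsum : Tendsto (fun i => (a*z i) ^ (C₁/E₁) + M * (a*z i) ^ ((C₁/E₁)*(1+ε)))
        atTop (𝓝 0) := by simpa using h1.add h2
    exact tendsto_of_tendsto_of_tendsto_of_le_of_le tendsto_const_nhds hsum hlb hub
  have hρε : Tendsto (fun i => M * ρ i ^ ((C₂/E₂)*ε)) atTop (𝓝 0) := by
    have h := (Real.continuousAt_rpow_const 0 ((C₂/E₂)*ε)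
      (Or.inr (by positivity : (0:ℝ) ≤ (C₂/E₂)*ε))).tendsto.comp hρlim
    have h2 : Tendsto (fun i => ρ i ^ ((C₂/E₂)*ε)) atTop (𝓝 0) := by
      simpa [Function.comp_def, Real.zero_rpow (by positivity : ((C₂/E₂)*ε) ≠ 0)] using h
    simpa using h2.const_mul M
  have hq : Tendsto (fun i => z (i+1) / ρ i ^ (C₂/E₂)) atTop (𝓝 1) := by
    have h0 : Tendsto (fun i => z (i+1) / ρ i ^ (C₂/E₂) - 1) atTop (𝓝 0) := by
      apply squeeze_zero_norm _ hρε
      intro i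
      have hr : (0:ℝ) < ρ i ^ (C₂/E₂) := Real.rpow_pos_of_pos (hρpos i) _
      have he : z (i+1) / ρ i ^ (C₂/E₂) - 1 = U i / ρ i ^ (C₂/E₂) := by
        field_simp [hzdef i]
        linarith [hzdef i]
      rw [he, Real.norm_eq_abs, abs_div, abs_of_pos hr, div_le_iff₀ hr]
      calc |U i| ≤ M * ρ i ^ ((C₂/E₂)*(1+ε)) := hU i
        _ = M * ρ i ^ ((C₂/E₂)*ε) * ρ i ^ (C₂/E₂) := by
            rw [mul_assoc, ← Real.rpow_add (hρpos i)]; ring_nf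
    have h1 := h0.add_const 1
    simpa using h1
  have hlog : Tendsto (fun i => Real.log (z (i+1)) - (C₂/E₂) * Real.log (ρ i))
      atTop (𝓝 0) := by
    have hcont := (Real.continuousAt_log (by norm_num : (1:ℝ) ≠ 0)).tendsto.comp hq
    have heq : ∀ i, Real.log (z (i+1) / ρ i ^ (C₂/E₂))
        = Real.log (z (i+1)) - (C₂/E₂) * Real.log (ρ i) := by
      intro i
      rw [Real.log_div (hzpos (i+1)).ne' (Real.rpow_pos_of_pos (hρpos i) _).ne',
        Real.log_rpow (hρpos i)]
    simp only [Function.comp_def, heq] at hcont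
    simpa using hcont
  rw [← tendsto_add_atTop_iff_nat 1]
  have heq : (fun n => (t (2*(n+1)+1) - t (2*(n+1)))
        - (C₂/E₁) * (t (2*(n+1)) - t (2*(n+1)-1)))
      = fun n => -(1/E₁) * Real.log a
        - (1/E₁) * (Real.log (z (n+1)) - (C₂/E₂) * Real.log (ρ n)) := by
    funext n
    have h1 := htodd (n+1)
    have h2 := hteven n
    rw [show 2*(n+1)+1 = 2*n+2+1 from by ring, show 2*(n+1) = 2*n+2 from by ring,
      show 2*n+2-1 = 2*n+1 from by omega]
    have h1' : t (2*n+2+1) - t (2*n+2) = -(1/E₁) * Real.log (a * z (n+1)) := by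
      have : 2*(n+1) = 2*n+2 := by ring
      have := htodd (n+1)
      simpa [show 2*(n+1)+1 = 2*n+2+1 from by ring, show 2*(n+1) = 2*n+2 from by ring]
        using this
    rw [h1', h2, Real.log_mul ha0.ne' (hzpos (n+1)).ne']
    field_simp
    ring
  rw [heq]
  have hc : Tendsto (fun _ : ℕ => -(1/E₁) * Real.log a) atTop (𝓝 (-(1/E₁) * Real.log a)) :=
    tendsto_const_nhds
  have hfin := hc.sub (hlog.const_mul (1/E₁))
  simpa using hfin
end

section
/- With the hitting-times setup below, the limit lim_{i→∞} [(t_{2i+2} − t_{2i+1}) − γ₁·(t_{2i+1} − t_{2i})] exists and equals 0. (Lemma 6.1(2).) -/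
open Real Filter Topology

/-- Hitting-times setup for an orbit in the basin of a Bykov attractor:
`z i` and `ρ i` are the height and radial coordinates of the successive hits
at the cross sections, and `t` is the sequence of hitting times. -/
theorem stmt_1
    (C₁ E₁ C₂ E₂ a ε M : ℝ)
    (hC₁ : C₁ > E₁) (hE₁ : E₁ > 0) (hC₂ : C₂ > E₂) (hE₂ : E₂ > 0)
    (ha : a ∈ Set.Ioo (0:ℝ) 1) (hε : ε ∈ Set.Ioo (0:ℝ) 1) (hM : M > 0)
    (z ρ S U t : ℕ → ℝ)
    (hz01 : ∀ i, z i ∈ Set.Ioo (0:ℝ) 1) (hρ01 : ∀ i, ρ i ∈ Set.Ioo (0:ℝ) 1)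
    (hzlim : Tendsto z atTop (𝓝 0))
    (hρdef : ∀ i, ρ i = (a * z i) ^ (C₁/E₁) + S i)
    (hS : ∀ i, |S i| ≤ M * (a * z i) ^ ((C₁/E₁) * (1+ε)))
    (hzdef : ∀ i, z (i+1) = (ρ i) ^ (C₂/E₂) + U i)
    (hU : ∀ i, |U i| ≤ M * (ρ i) ^ ((C₂/E₂) * (1+ε)))
    (ht0 : t 0 = 0)
    (htodd : ∀ i, t (2*i+1) - t (2*i) = -(1/E₁) * Real.log (a * z i))
    (hteven : ∀ i, t (2*i+2) - t (2*i+1) = -(1/E₂) * Real.log (ρ i)) :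
    Tendsto (fun i => (t (2*i+2) - t (2*i+1)) - (C₁/E₂) * (t (2*i+1) - t (2*i)))
      atTop (𝓝 0) := by
  have haz : ∀ i, 0 < a * z i := fun i => mul_pos ha.1 (hz01 i).1
  set δ₁ := C₁ / E₁ with hδ₁
  -- the ratio ρ i / (a*z i)^δ₁ tends to 1
  have hratio : Tendsto (fun i => ρ i / (a * z i) ^ δ₁) atTop (𝓝 1) := by
    have hazlim : Tendsto (fun i => a * z i) atTop (𝓝 0) := by
      have := hzlim.const_mul a
      simpa using this
    have hplim : Tendsto (fun i => (a * z i) ^ (δ₁ * ε)) atTop (𝓝 0) := by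
      have hcont : ContinuousAt (fun x : ℝ => x ^ (δ₁ * ε)) 0 :=
        Real.continuousAt_rpow_const 0 (δ₁ * ε)
          (Or.inr (le_of_lt (mul_pos (div_pos (lt_trans hE₁ hC₁) hE₁) hε.1)))
      have := hcont.tendsto.comp hazlim
      have h0 : (0:ℝ) ^ (δ₁ * ε) = 0 :=
        Real.zero_rpow (ne_of_gt (mul_pos (div_pos (lt_trans hE₁ hC₁) hE₁) hε.1))
      rw [h0] at this
      exact this
    have hMlim : Tendsto (fun i => M * (a * z i) ^ (δ₁ * ε)) atTop (𝓝 0) := by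
      have := hplim.const_mul M
      simpa using this
    have hbound : ∀ i, |ρ i / (a * z i) ^ δ₁ - 1| ≤ M * (a * z i) ^ (δ₁ * ε) := by
      intro i
      have hpow : (0:ℝ) < (a * z i) ^ δ₁ := Real.rpow_pos_of_pos (haz i) _
      have h1 : ρ i / (a * z i) ^ δ₁ - 1 = S i / (a * z i) ^ δ₁ := by
        field_simp [hρdef i]
        linarith [hρdef i]
      rw [h1, abs_div, abs_of_pos hpow, div_le_iff₀ hpow]
      calc |S i| ≤ M * (a * z i) ^ (δ₁ * (1 + ε)) := hS i
        _ = M * (a * z i) ^ (δ₁ * ε) * (a * z i) ^ δ₁ := by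
            rw [mul_assoc, ← Real.rpow_add (haz i)]; ring_nf
    have habs : Tendsto (fun i => ρ i / (a * z i) ^ δ₁ - 1) atTop (𝓝 0) :=
      squeeze_zero_norm hbound hMlim
    have := habs.add_const 1
    simpa using this
  -- log of the ratio tends to 0
  have hlog : Tendsto (fun i => Real.log (ρ i / (a * z i) ^ δ₁)) atTop (𝓝 0) := by
    have := (Real.continuousAt_log one_ne_zero).tendsto.comp hratio
    simpa [Function.comp_def] using this
  have hfinal := hlog.const_mul (-(1/E₂))
  rw [mul_zero] at hfinal
  refine hfinal.congr (fun i => ?_)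
  have hpow : (0:ℝ) < (a * z i) ^ δ₁ := Real.rpow_pos_of_pos (haz i) _
  rw [Real.log_div (ne_of_gt (hρ01 i).1) (ne_of_gt hpow),
    Real.log_rpow (haz i), hteven i, htodd i]
  have h1 : E₁ ≠ 0 := ne_of_gt hE₁
  have h2 : E₂ ≠ 0 := ne_of_gt hE₂
  field_simp [hδ₁]
  have hδE : δ₁ * E₁ = C₁ := by rw [hδ₁]; exact div_mul_cancel₀ C₁ h1
  linear_combination (Real.log (a * z i)) * hδE
end

section
/- With the hitting-times setup below, the limit lim_{i→∞} [(t_{2i+2} − t_{2i}) − δ·(t_{2i} − t_{2i−2})] exists and equals −τ·log a. (Lemma 6.1(3): consecutive full return times satisfy an asymptotic affine recursion with slope δ = γ₁γ₂ and constant term −τ·log a.) -/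
open Real Filter Topology

/-- If `p i → 0` with `p i > 0`, then `p i ^ c → 0` for `c > 0`. -/
lemma rpow_tendsto_zero (c : ℝ) (hc : 0 < c) (p : ℕ → ℝ)
    (hp0 : Tendsto p atTop (𝓝 0)) :
    Tendsto (fun i => p i ^ c) atTop (𝓝 0) := by
  have h := (Real.continuousAt_rpow_const 0 c (Or.inr hc.le)).tendsto.comp hp0
  simpa [Function.comp_def, Real.zero_rpow hc.ne'] using h

/-- Key asymptotic lemma: if `q i = p i ^ c + V i` with `|V i| ≤ M p i ^ (c(1+ε))`
and `p i → 0`, then `q i → 0` and `log (q i) - c log (p i) → 0`. -/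
lemma key_aux (c ε M : ℝ) (hc : 0 < c) (hε : 0 < ε) (p q V : ℕ → ℝ)
    (hp : ∀ i, 0 < p i) (hq : ∀ i, 0 < q i) (hp0 : Tendsto p atTop (𝓝 0))
    (hqd : ∀ i, q i = p i ^ c + V i) (hV : ∀ i, |V i| ≤ M * p i ^ (c * (1+ε))) :
    Tendsto q atTop (𝓝 0) ∧
      Tendsto (fun i => Real.log (q i) - c * Real.log (p i)) atTop (𝓝 0) := by
  have hpc : Tendsto (fun i => p i ^ c) atTop (𝓝 0) := rpow_tendsto_zero c hc p hp0
  have hpce : Tendsto (fun i => p i ^ (c * (1+ε))) atTop (𝓝 0) :=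
    rpow_tendsto_zero _ (by positivity) p hp0
  have hpcε : Tendsto (fun i => p i ^ (c * ε)) atTop (𝓝 0) :=
    rpow_tendsto_zero _ (by positivity) p hp0
  have hV0 : Tendsto V atTop (𝓝 0) := by
    have hg : Tendsto (fun i => M * p i ^ (c * (1+ε))) atTop (𝓝 0) := by
      simpa using hpce.const_mul M
    exact squeeze_zero_norm (fun i => hV i) hg
  have hq0 : Tendsto q atTop (𝓝 0) := by
    have := hpc.add hV0
    simpa [← hqd] using this
  refine ⟨hq0, ?_⟩
  -- ratio → 1
  have hrat : Tendsto (fun i => q i / p i ^ c) atTop (𝓝 1) := by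
    have hsmall : Tendsto (fun i => V i / p i ^ c) atTop (𝓝 0) := by
      have hg : Tendsto (fun i => M * p i ^ (c * ε)) atTop (𝓝 0) := by
        simpa using hpcε.const_mul M
      refine squeeze_zero_norm (fun i => ?_) hg
      have hpcpos : 0 < p i ^ c := Real.rpow_pos_of_pos (hp i) c
      have : |V i / p i ^ c| = |V i| / p i ^ c := by
        rw [abs_div, abs_of_pos hpcpos]
      rw [Real.norm_eq_abs, this, div_le_iff₀ hpcpos]
      calc |V i| ≤ M * p i ^ (c * (1+ε)) := hV i
        _ = M * p i ^ (c * ε) * p i ^ c := by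
            rw [mul_assoc, ← Real.rpow_add (hp i)]; ring_nf
    have heq : ∀ i, q i / p i ^ c = 1 + V i / p i ^ c := by
      intro i
      have hpcpos : 0 < p i ^ c := Real.rpow_pos_of_pos (hp i) c
      rw [hqd i, add_div, div_self hpcpos.ne']
    have := (tendsto_const_nhds (x := (1:ℝ)) (f := atTop)).add hsmall
    simpa [← heq] using this
  have hlog : Tendsto (fun i => Real.log (q i / p i ^ c)) atTop (𝓝 0) := by
    have := (Real.continuousAt_log one_ne_zero).tendsto.comp hrat
    simpa [Function.comp_def] using this
  refine hlog.congr fun i => ?_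
  have hpcpos : 0 < p i ^ c := Real.rpow_pos_of_pos (hp i) c
  rw [Real.log_div (hq i).ne' hpcpos.ne', Real.log_rpow (hp i)]

/-- Hitting-times setup for an orbit in the basin of a Bykov attractor:
`z i` and `ρ i` are the height and radial coordinates of the successive hits
at the cross sections, and `t` is the sequence of hitting times. -/
theorem stmt_2
    (C₁ E₁ C₂ E₂ a ε M : ℝ)
    (hC₁ : C₁ > E₁) (hE₁ : E₁ > 0) (hC₂ : C₂ > E₂) (hE₂ : E₂ > 0)
    (ha : a ∈ Set.Ioo (0:ℝ) 1) (hε : ε ∈ Set.Ioo (0:ℝ) 1) (hM : M > 0)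
    (z ρ S U t : ℕ → ℝ)
    (hz01 : ∀ i, z i ∈ Set.Ioo (0:ℝ) 1) (hρ01 : ∀ i, ρ i ∈ Set.Ioo (0:ℝ) 1)
    (hzlim : Tendsto z atTop (𝓝 0))
    (hρdef : ∀ i, ρ i = (a * z i) ^ (C₁/E₁) + S i)
    (hS : ∀ i, |S i| ≤ M * (a * z i) ^ ((C₁/E₁) * (1+ε)))
    (hzdef : ∀ i, z (i+1) = (ρ i) ^ (C₂/E₂) + U i)
    (hU : ∀ i, |U i| ≤ M * (ρ i) ^ ((C₂/E₂) * (1+ε)))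
    (ht0 : t 0 = 0)
    (htodd : ∀ i, t (2*i+1) - t (2*i) = -(1/E₁) * Real.log (a * z i))
    (hteven : ∀ i, t (2*i+2) - t (2*i+1) = -(1/E₂) * Real.log (ρ i)) :
    Tendsto (fun i => (t (2*i+2) - t (2*i)) - ((C₁/E₁) * (C₂/E₂)) * (t (2*i) - t (2*i-2)))
      atTop (𝓝 (-((1 + C₁/E₂)/E₁ * Real.log a))) := by
  set δ₁ := C₁/E₁ with hδ₁
  set δ₂ := C₂/E₂ with hδ₂
  set τ := (1 + C₁/E₂)/E₁ with hτ
  have hδ₁pos : 0 < δ₁ := div_pos (hE₁.trans hC₁) hE₁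
  have hδ₂pos : 0 < δ₂ := div_pos (hE₂.trans hC₂) hE₂
  have hazpos : ∀ i, 0 < a * z i := fun i => mul_pos ha.1 (hz01 i).1
  have haz0 : Tendsto (fun i => a * z i) atTop (𝓝 0) := by
    simpa using hzlim.const_mul a
  -- first application of key_aux
  obtain ⟨hρ0, he⟩ := key_aux δ₁ ε M hδ₁pos hε.1 (fun i => a * z i) ρ S
    hazpos (fun i => (hρ01 i).1) haz0 hρdef hS
  -- second application
  obtain ⟨_, hf⟩ := key_aux δ₂ ε M hδ₂pos hε.1 ρ (fun i => z (i+1)) U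
    (fun i => (hρ01 i).1) (fun i => (hz01 (i+1)).1) hρ0 hzdef hU
  set e : ℕ → ℝ := fun i => Real.log (ρ i) - δ₁ * Real.log (a * z i) with hedef
  set f : ℕ → ℝ := fun i => Real.log (z (i+1)) - δ₂ * Real.log (ρ i) with hfdef
  have he' : Tendsto e atTop (𝓝 0) := he
  have hf' : Tendsto f atTop (𝓝 0) := hf
  have he1 : Tendsto (fun j => e (j+1)) atTop (𝓝 0) :=
    (tendsto_add_atTop_iff_nat 1).mpr he'
  rw [← tendsto_add_atTop_iff_nat 1]
  have hg0 : Tendsto (fun j => (-(τ*δ₂) + δ₁*δ₂/E₂) * e j - τ * f j - e (j+1)/E₂)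
      atTop (𝓝 0) := by
    have h1 := he'.const_mul (-(τ*δ₂) + δ₁*δ₂/E₂)
    have h2 := hf'.const_mul τ
    have h3 := he1.div_const E₂
    simpa using (h1.sub h2).sub h3
  have hlim : Tendsto (fun j => -(τ * Real.log a) +
      ((-(τ*δ₂) + δ₁*δ₂/E₂) * e j - τ * f j - e (j+1)/E₂)) atTop
      (𝓝 (-(τ * Real.log a))) := by
    simpa using (tendsto_const_nhds (x := -(τ * Real.log a)) (f := atTop)).add hg0
  refine hlim.congr fun j => ?_
  -- now the algebraic identity
  have hidx : 2*(j+1)-2 = 2*j := by omega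
  rw [hidx]
  have i1 := hteven (j+1)
  have i2 := htodd (j+1)
  have i3 := hteven j
  have i4 := htodd j
  have A1 : t (2*(j+1)+2) - t (2*(j+1)) =
      -(1/E₂) * Real.log (ρ (j+1)) + -(1/E₁) * Real.log (a * z (j+1)) := by
    linarith
  have A2 : t (2*(j+1)) - t (2*j) =
      -(1/E₂) * Real.log (ρ j) + -(1/E₁) * Real.log (a * z j) := by
    have h2j : 2*(j+1) = 2*j+2 := by ring
    rw [h2j]; linarith
  rw [A1, A2]
  have hρj : Real.log (ρ j) = δ₁ * Real.log (a * z j) + e j := by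
    simp [hedef]
  have hρj1 : Real.log (ρ (j+1)) = δ₁ * Real.log (a * z (j+1)) + e (j+1) := by
    simp [hedef]
  have hzj1 : Real.log (z (j+1)) = δ₂ * Real.log (ρ j) + f j := by
    simp [hfdef]
  have hlaz : Real.log (a * z (j+1)) = Real.log a + Real.log (z (j+1)) :=
    Real.log_mul ha.1.ne' (hz01 (j+1)).1.ne'
  rw [hρj1, hlaz, hzj1, hρj]
  rw [hδ₁, hδ₂, hτ]
  field_simp
  ring
end

section
/- With the hitting-times setup below, define for each i ≥ 1 the remainder R_i := (t_{2i+2} − t_{2i}) − δ·(t_{2i} − t_{2i−2}) + τ·log a. Then the series ∑_{i=1}^∞ i·|R_i| converges. (Lemma 6.1(4).) -/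
open Real Filter Topology

private lemma abs_sub_le'' (x y : ℝ) : |x - y| ≤ |x| + |y| := by
  calc |x - y| = |x + -y| := by rw [sub_eq_add_neg]
    _ ≤ |x| + |-y| := abs_add_le x (-y)
    _ = |x| + |y| := by rw [abs_neg]

private lemma abs_log_le_two' {y : ℝ} (hy : 1/2 ≤ y) : |Real.log y| ≤ 2 * |y - 1| := by
  have hy0 : (0:ℝ) < y := by linarith
  rcases le_or_gt 1 y with h | h
  · rw [abs_of_nonneg (Real.log_nonneg h), abs_of_nonneg (by linarith)]
    have := Real.log_le_sub_one_of_pos hy0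
    linarith
  · rw [abs_of_nonpos (Real.log_nonpos (by linarith) h.le), abs_of_neg (by linarith)]
    have h2 : Real.log y⁻¹ ≤ y⁻¹ - 1 := Real.log_le_sub_one_of_pos (by positivity)
    rw [Real.log_inv] at h2
    have h3 : y⁻¹ - 1 ≤ 2 * (1 - y) := by
      have hyy : y * y⁻¹ = 1 := mul_inv_cancel₀ hy0.ne'
      nlinarith [sq_nonneg (2*y - 1)]
    linarith

private lemma key_log_bound (M d η x r s : ℝ) (hx0 : 0 < x) (hr0 : 0 < r)
    (hdef : r = x ^ d + s) (hs : |s| ≤ M * x ^ (d * (1 + η)))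
    (hsmall : M * x ^ (d * η) ≤ 1 / 2) :
    |Real.log r - d * Real.log x| ≤ 2 * (M * x ^ (d * η)) := by
  have hP : (0:ℝ) < x ^ d := Real.rpow_pos_of_pos hx0 d
  have hsplit : M * x ^ (d * (1 + η)) = (M * x ^ (d * η)) * x ^ d := by
    rw [show d * (1 + η) = d + d * η by ring, Real.rpow_add hx0]; ring
  have hs' : |s| ≤ (M * x ^ (d * η)) * x ^ d := hsplit ▸ hs
  have hym : |r / x ^ d - 1| ≤ M * x ^ (d * η) := by
    have h1 : r / x ^ d - 1 = s / x ^ d := by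
      field_simp [hdef]
      linarith
    rw [h1, abs_div, abs_of_pos hP, div_le_iff₀ hP]
    exact hs'
  have hyhalf : 1/2 ≤ r / x ^ d := by
    have := abs_le.mp hym
    linarith [this.1]
  have hlog : Real.log r - d * Real.log x = Real.log (r / x ^ d) := by
    rw [Real.log_div hr0.ne' hP.ne', Real.log_rpow hx0]
  rw [hlog]
  calc |Real.log (r / x ^ d)| ≤ 2 * |r / x ^ d - 1| := abs_log_le_two' hyhalf
    _ ≤ 2 * (M * x ^ (d * η)) := by linarith

set_option maxHeartbeats 2000000 in
/-- Hitting-times setup for an orbit in the basin of a Bykov attractor: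
`z i` and `ρ i` are the height and radial coordinates of the successive hits
at the cross sections, and `t` is the sequence of hitting times. -/
theorem stmt_3
    (C₁ E₁ C₂ E₂ a ε M : ℝ)
    (hC₁ : C₁ > E₁) (hE₁ : E₁ > 0) (hC₂ : C₂ > E₂) (hE₂ : E₂ > 0)
    (ha : a ∈ Set.Ioo (0:ℝ) 1) (hε : ε ∈ Set.Ioo (0:ℝ) 1) (hM : M > 0)
    (z ρ S U t : ℕ → ℝ)
    (hz01 : ∀ i, z i ∈ Set.Ioo (0:ℝ) 1) (hρ01 : ∀ i, ρ i ∈ Set.Ioo (0:ℝ) 1)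
    (hzlim : Tendsto z atTop (𝓝 0))
    (hρdef : ∀ i, ρ i = (a * z i) ^ (C₁/E₁) + S i)
    (hS : ∀ i, |S i| ≤ M * (a * z i) ^ ((C₁/E₁) * (1+ε)))
    (hzdef : ∀ i, z (i+1) = (ρ i) ^ (C₂/E₂) + U i)
    (hU : ∀ i, |U i| ≤ M * (ρ i) ^ ((C₂/E₂) * (1+ε)))
    (ht0 : t 0 = 0)
    (htodd : ∀ i, t (2*i+1) - t (2*i) = -(1/E₁) * Real.log (a * z i))
    (hteven : ∀ i, t (2*i+2) - t (2*i+1) = -(1/E₂) * Real.log (ρ i)) :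
    Summable (fun i : ℕ => (i : ℝ) *
      |(t (2*i+2) - t (2*i)) - ((C₁/E₁) * (C₂/E₂)) * (t (2*i) - t (2*i-2))
        + (1 + C₁/E₂)/E₁ * Real.log a|) := by
  obtain ⟨ha0, ha1⟩ := ha
  obtain ⟨hε0, hε1⟩ := hε
  have hd1 : 1 < C₁/E₁ := (one_lt_div hE₁).mpr hC₁
  have hd2 : 1 < C₂/E₂ := (one_lt_div hE₂).mpr hC₂
  set d1 : ℝ := C₁/E₁ with hd1def
  set d2 : ℝ := C₂/E₂ with hd2def
  clear_value d1 d2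
  -- basic positivity
  have hx0 : ∀ j, 0 < a * z j := fun j => mul_pos ha0 (hz01 j).1
  have hx1 : ∀ j, a * z j < 1 := by
    intro j
    nlinarith [(hz01 j).1, (hz01 j).2]
  -- limits
  have hxlim : Tendsto (fun j => a * z j) atTop (𝓝 0) := by
    simpa using hzlim.const_mul a
  have hrp2 : ∀ p : ℝ, 0 < p → Tendsto (fun j => (a * z j) ^ p) atTop (𝓝 0) := by
    intro p hp
    have hc : ContinuousAt (fun x : ℝ => x ^ p) 0 :=
      Real.continuousAt_rpow_const 0 p (Or.inr hp.le)
    have := hc.tendsto.comp hxlim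
    simpa [Function.comp_def, Real.zero_rpow hp.ne'] using this
  have hrp : ∀ p : ℝ, 0 < p → Tendsto (fun j => M * (a * z j) ^ p) atTop (𝓝 0) := by
    intro p hp
    simpa using (hrp2 p hp).const_mul M
  have hev1 := (hrp (d1*ε) (by nlinarith)).eventually_lt_const (by norm_num : (0:ℝ) < 1/2)
  have hev2 := (hrp (d2*ε) (by nlinarith)).eventually_lt_const (by norm_num : (0:ℝ) < 1/2)
  have hev3 := (hrp2 (d1-1) (by linarith)).eventually_lt_const (by norm_num : (0:ℝ) < 2/3)
  have hev4 := (hrp2 (d2-1) (by linarith)).eventually_lt_const (by norm_num : (0:ℝ) < 1/3)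
  obtain ⟨N, hN⟩ := eventually_atTop.mp (((hev1.and hev2).and hev3).and hev4)
  -- per-step estimates
  have hstep : ∀ j, N ≤ j →
      |Real.log (ρ j) - d1 * Real.log (a * z j)| ≤ 2 * M * (a * z j) ^ ε ∧
      |Real.log (z (j+1)) - d2 * Real.log (ρ j)| ≤ 2 * M * (a * z j) ^ ε ∧
      z (j+1) ≤ z j / 2 := by
    intro j hj
    obtain ⟨⟨⟨h1, h2⟩, h3⟩, h4⟩ := hN j hj
    have hxj0 := hx0 j
    have hxj1 := hx1 j
    have hPd1 : (0:ℝ) < (a * z j) ^ d1 := Real.rpow_pos_of_pos hxj0 _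
    have hεle : ∀ p : ℝ, 1 < p → (a * z j) ^ (p * ε) ≤ (a * z j) ^ ε := by
      intro p hp
      exact Real.rpow_le_rpow_of_exponent_ge hxj0 hxj1.le (by nlinarith)
    have hεpos : (0:ℝ) < (a * z j) ^ ε := Real.rpow_pos_of_pos hxj0 _
    -- e bound
    have he : |Real.log (ρ j) - d1 * Real.log (a * z j)| ≤ 2 * M * (a * z j) ^ ε := by
      have hk := key_log_bound M d1 ε (a * z j) (ρ j) (S j) hxj0 (hρ01 j).1
        (hρdef j) (hS j) h1.le
      have hm := mul_le_mul_of_nonneg_left (hεle d1 hd1) hM.le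
      calc |Real.log (ρ j) - d1 * Real.log (a * z j)|
          ≤ 2 * (M * (a * z j) ^ (d1 * ε)) := hk
        _ ≤ 2 * M * (a * z j) ^ ε := by linarith
    -- ρ j ≤ a * z j
    have hsplit1 : M * (a * z j) ^ (d1 * (1 + ε))
        = (M * (a * z j) ^ (d1 * ε)) * (a * z j) ^ d1 := by
      rw [show d1 * (1 + ε) = d1 + d1 * ε by ring, Real.rpow_add hxj0]; ring
    have hxd : (a * z j) ^ d1 = (a * z j) ^ (d1 - 1) * (a * z j) := by
      have h := Real.rpow_add hxj0 (d1 - 1) 1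
      rw [Real.rpow_one, show d1 - 1 + 1 = d1 from by ring] at h
      exact h
    have hρx : ρ j ≤ a * z j := by
      have hSb := (abs_le.mp (hS j)).2
      rw [hsplit1] at hSb
      have hρeq := hρdef j
      have k1 : M * (a * z j) ^ (d1 * ε) * (a * z j) ^ d1
          ≤ (1/2) * (a * z j) ^ d1 := mul_le_mul_of_nonneg_right h1.le hPd1.le
      have k2 : (a * z j) ^ (d1 - 1) * (a * z j) ≤ (2/3) * (a * z j) :=
        mul_le_mul_of_nonneg_right h3.le hxj0.le
      linarith [hρeq, hSb, k1, k2, hxd]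
    have hρ0 := (hρ01 j).1
    -- smallness at ρ
    have hsmall2 : M * (ρ j) ^ (d2 * ε) ≤ 1 / 2 := by
      have hle : (ρ j) ^ (d2 * ε) ≤ (a * z j) ^ (d2 * ε) :=
        Real.rpow_le_rpow hρ0.le hρx (by nlinarith)
      have hm := mul_le_mul_of_nonneg_left hle hM.le
      linarith
    -- f bound
    have hf : |Real.log (z (j+1)) - d2 * Real.log (ρ j)| ≤ 2 * M * (a * z j) ^ ε := by
      have hk := key_log_bound M d2 ε (ρ j) (z (j+1)) (U j) hρ0 (hz01 (j+1)).1
        (hzdef j) (hU j) hsmall2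
      have hle : (ρ j) ^ (d2 * ε) ≤ (a * z j) ^ (d2 * ε) :=
        Real.rpow_le_rpow hρ0.le hρx (by nlinarith)
      have hm1 := mul_le_mul_of_nonneg_left hle hM.le
      have hm2 := mul_le_mul_of_nonneg_left (hεle d2 hd2) hM.le
      calc |Real.log (z (j+1)) - d2 * Real.log (ρ j)|
          ≤ 2 * (M * (ρ j) ^ (d2 * ε)) := hk
        _ ≤ 2 * M * (a * z j) ^ ε := by linarith
    -- decay
    have hdec : z (j+1) ≤ z j / 2 := by
      have hUb := (abs_le.mp (hU j)).2
      have hPd2 : (0:ℝ) < (ρ j) ^ d2 := Real.rpow_pos_of_pos hρ0 _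
      have hsplit2 : M * (ρ j) ^ (d2 * (1 + ε))
          = (M * (ρ j) ^ (d2 * ε)) * (ρ j) ^ d2 := by
        rw [show d2 * (1 + ε) = d2 + d2 * ε by ring, Real.rpow_add hρ0]; ring
      rw [hsplit2] at hUb
      have hρd : (ρ j) ^ d2 = (ρ j) ^ (d2 - 1) * (ρ j) := by
        have h := Real.rpow_add hρ0 (d2 - 1) 1
        rw [Real.rpow_one, show d2 - 1 + 1 = d2 from by ring] at h
        exact h
      have hρd2le : (ρ j) ^ (d2 - 1) ≤ (a * z j) ^ (d2 - 1) :=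
        Real.rpow_le_rpow hρ0.le hρx (by linarith)
      have hzeq := hzdef j
      have hax : a * z j ≤ z j := by nlinarith [(hz01 j).1]
      have k4 : M * (ρ j) ^ (d2 * ε) * (ρ j) ^ d2 ≤ (1/2) * (ρ j) ^ d2 :=
        mul_le_mul_of_nonneg_right hsmall2 hPd2.le
      have k3 : (ρ j) ^ (d2 - 1) * (ρ j) ≤ (1/3) * (a * z j) :=
        mul_le_mul (hρd2le.trans h4.le) hρx hρ0.le (by norm_num)
      linarith [hzeq, hUb, k4, hρd, k3, hax]
    exact ⟨he, hf, hdec⟩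
  -- geometric decay of z from N on
  have hdecay : ∀ k, z (N + k) ≤ z N * (1/2)^k := by
    intro k
    induction k with
    | zero => simp
    | succ n ih =>
      have hd := (hstep (N + n) (Nat.le_add_right _ _)).2.2
      calc z (N + (n+1)) = z (N + n + 1) := by rw [Nat.add_assoc]
        _ ≤ z (N + n) / 2 := hd
        _ ≤ z N * (1/2)^n / 2 := by linarith
        _ = z N * (1/2)^(n+1) := by ring
  -- constants
  have hd1pos : (0:ℝ) < d1 := by linarith
  have hd2pos : (0:ℝ) < d2 := by linarith
  set τ : ℝ := 1/E₁ + d1/E₂ with hτdef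
  have hτ0 : 0 < τ := add_pos (by positivity) (div_pos hd1pos hE₂)
  set A : ℝ := (d1*d2/E₂ + τ*d2) + τ + 1/E₂ with hAdef
  clear_value τ A
  have hA0 : 0 < A := by
    have h1 : 0 < d1*d2/E₂ := div_pos (mul_pos hd1pos hd2pos) hE₂
    have h2 : 0 < τ*d2 := mul_pos hτ0 hd2pos
    have h3 : (0:ℝ) < 1/E₂ := by positivity
    rw [hAdef]; linarith
  -- the remainder bound
  have hR : ∀ j, N ≤ j →
      |(t (2*(j+1)+2) - t (2*(j+1))) - (d1 * d2) * (t (2*(j+1)) - t (2*(j+1)-2))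
        + (1 + C₁/E₂)/E₁ * Real.log a| ≤ A * (2 * M * (a * z j) ^ ε) := by
    intro j hj
    obtain ⟨hej, hfj, hdecj⟩ := hstep j hj
    obtain ⟨hej1, -, -⟩ := hstep (j+1) (by omega)
    have hzj1 : a * z (j+1) ≤ a * z j := by
      have := (hz01 (j+1)).1
      nlinarith
    have hej1' : |Real.log (ρ (j+1)) - d1 * Real.log (a * z (j+1))|
        ≤ 2 * M * (a * z j) ^ ε := by
      have hmono : (a * z (j+1)) ^ ε ≤ (a * z j) ^ ε :=
        Real.rpow_le_rpow (hx0 (j+1)).le hzj1 hε0.le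
      have hm := mul_le_mul_of_nonneg_left hmono (by positivity : (0:ℝ) ≤ 2*M)
      linarith
    -- index normalization
    have hi1 : 2*(j+1)-2 = 2*j := by omega
    have hi2 : 2*(j+1) = 2*j+2 := by ring
    have hi3 : 2*(j+1)+1 = 2*j+3 := by ring
    have hi4 : 2*(j+1)+2 = 2*j+4 := by ring
    rw [hi1, hi2]
    have e1 := hteven (j+1); rw [hi4, hi3] at e1
    have e2 := htodd (j+1); rw [hi3, hi2] at e2
    have e3 := hteven j
    have e4 := htodd j
    have hlogz : Real.log (a * z (j+1)) = Real.log a + Real.log (z (j+1)) :=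
      Real.log_mul ha0.ne' (hz01 (j+1)).1.ne'
    have hid : (t (2*j+4) - t (2*j+2)) - (d1 * d2) * (t (2*j+2) - t (2*j))
        + (1 + C₁/E₂)/E₁ * Real.log a
        = (d1*d2/E₂ - τ*d2) * (Real.log (ρ j) - d1 * Real.log (a * z j))
          - τ * (Real.log (z (j+1)) - d2 * Real.log (ρ j))
          - (1/E₂) * (Real.log (ρ (j+1)) - d1 * Real.log (a * z (j+1))) := by
      rw [hτdef, hd1def, hd2def]
      linear_combination e1 + e2 - (C₁/E₁*(C₂/E₂))*e3 - (C₁/E₁*(C₂/E₂))*e4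
        - (1/E₁ + (C₁/E₁)/E₂)*hlogz
    rw [hid]
    have hβ : (0:ℝ) ≤ 2 * M * (a * z j) ^ ε :=
      mul_nonneg (by positivity) (Real.rpow_pos_of_pos (hx0 j) ε).le
    have hc1 : |d1*d2/E₂ - τ*d2| ≤ d1*d2/E₂ + τ*d2 := by
      have h := abs_sub_le'' (d1*d2/E₂) (τ*d2)
      have h1 : |d1*d2/E₂| = d1*d2/E₂ := abs_of_pos (div_pos (mul_pos hd1pos hd2pos) hE₂)
      have h2 : |τ*d2| = τ*d2 := abs_of_pos (mul_pos hτ0 hd2pos)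
      rw [h1, h2] at h; exact h
    have t1 := abs_sub_le''
      ((d1*d2/E₂ - τ*d2) * (Real.log (ρ j) - d1 * Real.log (a * z j))
        - τ * (Real.log (z (j+1)) - d2 * Real.log (ρ j)))
      ((1/E₂) * (Real.log (ρ (j+1)) - d1 * Real.log (a * z (j+1))))
    have t2 := abs_sub_le''
      ((d1*d2/E₂ - τ*d2) * (Real.log (ρ j) - d1 * Real.log (a * z j)))
      (τ * (Real.log (z (j+1)) - d2 * Real.log (ρ j)))
    rw [abs_mul] at t1
    rw [abs_mul, abs_mul] at t2
    have hτabs : |τ| = τ := abs_of_pos hτ0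
    have hE2abs : |1/E₂| = 1/E₂ := abs_of_pos (by positivity)
    rw [hτabs] at t2
    rw [hE2abs] at t1
    have b1 : |d1*d2/E₂ - τ*d2| * |Real.log (ρ j) - d1 * Real.log (a * z j)|
        ≤ (d1*d2/E₂ + τ*d2) * (2 * M * (a * z j) ^ ε) :=
      mul_le_mul hc1 hej (abs_nonneg _)
        (by linarith [div_pos (mul_pos hd1pos hd2pos) hE₂, mul_pos hτ0 hd2pos])
    have b2 : τ * |Real.log (z (j+1)) - d2 * Real.log (ρ j)|
        ≤ τ * (2 * M * (a * z j) ^ ε) := by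
      exact mul_le_mul_of_nonneg_left hfj hτ0.le
    have b3 : (1/E₂) * |Real.log (ρ (j+1)) - d1 * Real.log (a * z (j+1))|
        ≤ (1/E₂) * (2 * M * (a * z j) ^ ε) :=
      mul_le_mul_of_nonneg_left hej1' (by positivity : (0:ℝ) ≤ 1/E₂)
    calc |(d1*d2/E₂ - τ*d2) * (Real.log (ρ j) - d1 * Real.log (a * z j))
          - τ * (Real.log (z (j+1)) - d2 * Real.log (ρ j))
          - (1/E₂) * (Real.log (ρ (j+1)) - d1 * Real.log (a * z (j+1)))|
        ≤ (d1*d2/E₂ + τ*d2) * (2 * M * (a * z j) ^ ε)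
          + τ * (2 * M * (a * z j) ^ ε) + (1/E₂) * (2 * M * (a * z j) ^ ε) :=
          t1.trans (add_le_add (t2.trans (add_le_add b1 b2)) b3)
      _ = A * (2 * M * (a * z j) ^ ε) := by rw [hAdef]; ring
  -- final summability
  set c : ℝ := (1/2 : ℝ) ^ (ε : ℝ) with hcdef
  have hc0 : 0 < c := Real.rpow_pos_of_pos (by norm_num) _
  have hc1' : c < 1 := Real.rpow_lt_one (by norm_num) (by norm_num) hε0
  clear_value c
  set D : ℝ := A * (2 * M * (z N) ^ ε) with hDdef
  have hD0 : 0 ≤ D := mul_nonneg hA0.le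
    (mul_nonneg (by positivity) (Real.rpow_pos_of_pos (hz01 N).1 ε).le)
  clear_value D
  -- bound for the shifted terms
  have hbound : ∀ k : ℕ,
      ((k + (N+1) : ℕ) : ℝ) *
        |(t (2*(k + (N+1))+2) - t (2*(k + (N+1)))) - (d1 * d2) * (t (2*(k + (N+1)))
          - t (2*(k + (N+1))-2)) + (1 + C₁/E₂)/E₁ * Real.log a|
      ≤ ((k:ℝ) + N + 1) * (D * c ^ k) := by
    intro k
    have hkN : N ≤ k + N := Nat.le_add_left _ _
    have hRk := hR (k + N) hkN
    have hidx : k + (N + 1) = (k + N) + 1 := by omega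
    rw [hidx]
    have hcast : (((k + N) + 1 : ℕ) : ℝ) = (k:ℝ) + N + 1 := by push_cast; ring
    rw [hcast]
    have hnn : (0:ℝ) ≤ (k:ℝ) + N + 1 := by positivity
    apply mul_le_mul_of_nonneg_left _ hnn
    -- |R| ≤ D * c^k
    refine hRk.trans ?_
    have hzk : a * z (k + N) ≤ z N * (1/2)^k := by
      have h1 := hdecay k
      have h2 : z (k + N) = z (N + k) := by rw [Nat.add_comm]
      have h3 : a * z (k + N) ≤ z (k + N) := by
        nlinarith [(hz01 (k+N)).1]
      rw [h2] at h3 ⊢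
      linarith
    have hzN0 : (0:ℝ) < z N := (hz01 N).1
    have hrw : (z N * (1/2)^k) ^ (ε:ℝ) = (z N) ^ (ε:ℝ) * c ^ k := by
      rw [Real.mul_rpow hzN0.le (by positivity)]
      congr 1
      rw [hcdef, ← Real.rpow_natCast ((1:ℝ)/2) k, ← Real.rpow_mul (by norm_num),
        mul_comm ((k:ℕ):ℝ) ε, Real.rpow_mul (by norm_num), Real.rpow_natCast]
    have hmono : (a * z (k + N)) ^ (ε:ℝ) ≤ (z N * (1/2)^k) ^ (ε:ℝ) :=
      Real.rpow_le_rpow (hx0 (k+N)).le hzk hε0.le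
    rw [hrw] at hmono
    calc A * (2 * M * (a * z (k+N)) ^ ε)
        ≤ A * (2 * M * ((z N) ^ (ε:ℝ) * c ^ k)) := by
          apply mul_le_mul_of_nonneg_left _ hA0.le
          have hm := mul_le_mul_of_nonneg_left hmono (by positivity : (0:ℝ) ≤ 2*M)
          linarith
      _ = D * c ^ k := by rw [hDdef]; ring
  -- majorant is summable
  have hs1 : Summable (fun k : ℕ => (k:ℝ) * c ^ k) := by
    have := summable_pow_mul_geometric_of_norm_lt_one 1
      (r := c) (by rw [Real.norm_eq_abs, abs_of_pos hc0]; exact hc1')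
    simpa using this
  have hs2 : Summable (fun k : ℕ => c ^ k) := by
    have := summable_pow_mul_geometric_of_norm_lt_one 0
      (r := c) (by rw [Real.norm_eq_abs, abs_of_pos hc0]; exact hc1')
    simpa using this
  have hsm : Summable (fun k : ℕ => ((k:ℝ) + N + 1) * (D * c ^ k)) := by
    have : (fun k : ℕ => ((k:ℝ) + N + 1) * (D * c ^ k))
        = fun k : ℕ => D * ((k:ℝ) * c ^ k) + (D * (N + 1)) * c ^ k := by
      funext k; ring
    rw [this]
    exact (hs1.mul_left D).add (hs2.mul_left _)
  rw [← summable_nat_add_iff (N+1)]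
  apply Summable.of_nonneg_of_le (fun k => by positivity) _ hsm
  intro k
  exact hbound k
end

section
/- With the hitting-times setup below, lim_{i→∞} (t_{2i+2} − t_{2i+1})/(t_{2i+1} − t_{2i}) = γ₁. (Corollary 6.2(1).) -/
open Real Filter Topology

/-- Hitting-times setup for an orbit in the basin of a Bykov attractor:
`z i` and `ρ i` are the height and radial coordinates of the successive hits
at the cross sections, and `t` is the sequence of hitting times. -/
theorem stmt_4
    (C₁ E₁ C₂ E₂ a ε M : ℝ)
    (hC₁ : C₁ > E₁) (hE₁ : E₁ > 0) (hC₂ : C₂ > E₂) (hE₂ : E₂ > 0)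
    (ha : a ∈ Set.Ioo (0:ℝ) 1) (hε : ε ∈ Set.Ioo (0:ℝ) 1) (hM : M > 0)
    (z ρ S U t : ℕ → ℝ)
    (hz01 : ∀ i, z i ∈ Set.Ioo (0:ℝ) 1) (hρ01 : ∀ i, ρ i ∈ Set.Ioo (0:ℝ) 1)
    (hzlim : Tendsto z atTop (𝓝 0))
    (hρdef : ∀ i, ρ i = (a * z i) ^ (C₁/E₁) + S i)
    (hS : ∀ i, |S i| ≤ M * (a * z i) ^ ((C₁/E₁) * (1+ε)))
    (hzdef : ∀ i, z (i+1) = (ρ i) ^ (C₂/E₂) + U i)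
    (hU : ∀ i, |U i| ≤ M * (ρ i) ^ ((C₂/E₂) * (1+ε)))
    (ht0 : t 0 = 0)
    (htodd : ∀ i, t (2*i+1) - t (2*i) = -(1/E₁) * Real.log (a * z i))
    (hteven : ∀ i, t (2*i+2) - t (2*i+1) = -(1/E₂) * Real.log (ρ i)) :
    Tendsto (fun i => (t (2*i+2) - t (2*i+1)) / (t (2*i+1) - t (2*i)))
      atTop (𝓝 (C₁/E₂)) := by

  obtain ⟨ha0, ha1⟩ := ha
  obtain ⟨hε0, hε1⟩ := hε
  have hδ₁pos : 0 < C₁/E₁ := div_pos (hE₁.trans hC₁) hE₁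
  have hx_pos : ∀ i, 0 < a * z i := fun i => mul_pos ha0 (hz01 i).1
  have hx_lt1 : ∀ i, a * z i < 1 := fun i =>
    lt_trans (mul_lt_of_lt_one_right ha0 (hz01 i).2) ha1
  have hlogx_neg : ∀ i, Real.log (a * z i) < 0 := fun i =>
    Real.log_neg (hx_pos i) (hx_lt1 i)
  have hxlim : Tendsto (fun i => a * z i) atTop (𝓝 0) := by
    have := hzlim.const_mul a
    simpa using this
  have hpowlim : Tendsto (fun i => (a * z i) ^ ((C₁/E₁) * ε)) atTop (𝓝 0) := by
    have hc : ContinuousAt (fun x : ℝ => x ^ ((C₁/E₁) * ε)) 0 :=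
      Real.continuousAt_rpow_const 0 _ (Or.inr (by positivity))
    have := hc.tendsto.comp hxlim
    simpa [Function.comp_def, Real.zero_rpow (mul_pos hδ₁pos hε0).ne'] using this
  have hglim : Tendsto (fun i => ρ i / (a * z i) ^ (C₁/E₁)) atTop (𝓝 1) := by
    have hbound : ∀ i, ‖ρ i / (a * z i) ^ (C₁/E₁) - 1‖ ≤ M * (a * z i) ^ ((C₁/E₁) * ε) := by
      intro i
      have hxp := hx_pos i
      have hxd : (0:ℝ) < (a * z i) ^ (C₁/E₁) := Real.rpow_pos_of_pos hxp _
      have heq : ρ i / (a * z i) ^ (C₁/E₁) - 1 = S i / (a * z i) ^ (C₁/E₁) := by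
        rw [hρdef i]; field_simp; ring
      rw [heq, Real.norm_eq_abs, abs_div, abs_of_pos hxd, div_le_iff₀ hxd]
      calc |S i| ≤ M * (a * z i) ^ ((C₁/E₁) * (1+ε)) := hS i
        _ = M * (a * z i) ^ ((C₁/E₁) * ε) * (a * z i) ^ (C₁/E₁) := by
          rw [mul_assoc, ← Real.rpow_add hxp]; ring_nf
    have h0 : Tendsto (fun i => ρ i / (a * z i) ^ (C₁/E₁) - 1) atTop (𝓝 0) :=
      squeeze_zero_norm hbound (by simpa using hpowlim.const_mul M)
    have := h0.add_const 1
    simpa using this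
  have hlogg : Tendsto (fun i => Real.log (ρ i) - (C₁/E₁) * Real.log (a * z i))
      atTop (𝓝 0) := by
    have hcont : ContinuousAt Real.log 1 := Real.continuousAt_log one_ne_zero
    have h := hcont.tendsto.comp hglim
    rw [Real.log_one] at h
    refine h.congr fun i => ?_
    have hxp := hx_pos i
    have hxd : (0:ℝ) < (a * z i) ^ (C₁/E₁) := Real.rpow_pos_of_pos hxp _
    simp only [Function.comp_apply]
    rw [Real.log_div (hρ01 i).1.ne' hxd.ne', Real.log_rpow hxp]
  have hlogx : Tendsto (fun i => Real.log (a * z i)) atTop atBot := by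
    have hxw : Tendsto (fun i => a * z i) atTop (𝓝[>] 0) :=
      tendsto_nhdsWithin_of_tendsto_nhds_of_eventually_within _ hxlim
        (Eventually.of_forall fun i => hx_pos i)
    exact Real.tendsto_log_nhdsGT_zero.comp hxw
  have hinv : Tendsto (fun i => (Real.log (a * z i))⁻¹) atTop (𝓝 0) := by
    have h := (tendsto_neg_atBot_atTop.comp hlogx).inv_tendsto_atTop
    have h2 := h.neg
    simp only [Pi.inv_apply, Function.comp_apply, neg_zero] at h2 ⊢
    refine h2.congr fun i => ?_
    rw [inv_neg, neg_neg]
  have hmain : Tendsto (fun i => Real.log (ρ i) / Real.log (a * z i)) atTop (𝓝 (C₁/E₁)) := by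
    have h := (hlogg.mul hinv).const_add (C₁/E₁)
    rw [mul_zero, add_zero] at h
    refine h.congr fun i => ?_
    have hne := (hlogx_neg i).ne
    field_simp
    ring
  have key : ∀ i, (t (2*i+2) - t (2*i+1)) / (t (2*i+1) - t (2*i)) =
      (E₁/E₂) * (Real.log (ρ i) / Real.log (a * z i)) := by
    intro i
    rw [hteven i, htodd i]
    have hne := (hlogx_neg i).ne
    field_simp
  have hfin : (E₁/E₂) * (C₁/E₁) = C₁/E₂ := by
    field_simp
  have hlim := hmain.const_mul (E₁/E₂)
  rw [hfin] at hlim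
  exact hlim.congr fun i => (key i).symm
end

section
/- With the hitting-times setup below, lim_{i→∞} (t_{2i+1} − t_{2i})/(t_{2i} − t_{2i−1}) = γ₂. (Corollary 6.2(2).) -/
open Real Filter Topology

/-- Hitting-times setup for an orbit in the basin of a Bykov attractor:
`z i` and `ρ i` are the height and radial coordinates of the successive hits
at the cross sections, and `t` is the sequence of hitting times. -/
theorem stmt_5
    (C₁ E₁ C₂ E₂ a ε M : ℝ)
    (hC₁ : C₁ > E₁) (hE₁ : E₁ > 0) (hC₂ : C₂ > E₂) (hE₂ : E₂ > 0)
    (ha : a ∈ Set.Ioo (0:ℝ) 1) (hε : ε ∈ Set.Ioo (0:ℝ) 1) (hM : M > 0)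
    (z ρ S U t : ℕ → ℝ)
    (hz01 : ∀ i, z i ∈ Set.Ioo (0:ℝ) 1) (hρ01 : ∀ i, ρ i ∈ Set.Ioo (0:ℝ) 1)
    (hzlim : Tendsto z atTop (𝓝 0))
    (hρdef : ∀ i, ρ i = (a * z i) ^ (C₁/E₁) + S i)
    (hS : ∀ i, |S i| ≤ M * (a * z i) ^ ((C₁/E₁) * (1+ε)))
    (hzdef : ∀ i, z (i+1) = (ρ i) ^ (C₂/E₂) + U i)
    (hU : ∀ i, |U i| ≤ M * (ρ i) ^ ((C₂/E₂) * (1+ε)))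
    (ht0 : t 0 = 0)
    (htodd : ∀ i, t (2*i+1) - t (2*i) = -(1/E₁) * Real.log (a * z i))
    (hteven : ∀ i, t (2*i+2) - t (2*i+1) = -(1/E₂) * Real.log (ρ i)) :
    Tendsto (fun i => (t (2*i+1) - t (2*i)) / (t (2*i) - t (2*i-1)))
      atTop (𝓝 (C₂/E₁)) := by
  obtain ⟨ha0, ha1⟩ := ha
  obtain ⟨hε0, hε1⟩ := hε
  have hE₁' : E₁ ≠ 0 := ne_of_gt hE₁
  have hE₂' : E₂ ≠ 0 := ne_of_gt hE₂
  have hδ₁pos : 0 < C₁ / E₁ := div_pos (lt_trans hE₁ hC₁) hE₁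
  have hδ₂pos : 0 < C₂ / E₂ := div_pos (lt_trans hE₂ hC₂) hE₂
  have hρpos : ∀ j, 0 < ρ j := fun j => (hρ01 j).1
  have hzpos : ∀ j, 0 < z j := fun j => (hz01 j).1
  -- a * z → 0
  have hazlim : Tendsto (fun j => a * z j) atTop (𝓝 0) := by
    simpa using hzlim.const_mul a
  -- helper: x ↦ x ^ p tends to 0 along a*z for p > 0
  have hpow : ∀ p : ℝ, 0 < p →
      Tendsto (fun j => (a * z j) ^ p) atTop (𝓝 0) := by
    intro p hp
    have hc : ContinuousAt (fun x : ℝ => x ^ p) 0 :=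
      Real.continuousAt_rpow_const 0 p (Or.inr hp.le)
    have := hc.tendsto.comp hazlim
    simpa [Function.comp_def, Real.zero_rpow (ne_of_gt hp)] using this
  -- ρ → 0
  have hρlim : Tendsto ρ atTop (𝓝 0) := by
    have hb : Tendsto (fun j => (a * z j) ^ (C₁/E₁)
        + M * (a * z j) ^ ((C₁/E₁) * (1+ε))) atTop (𝓝 0) := by
      have h2 := (hpow ((C₁/E₁) * (1+ε)) (mul_pos hδ₁pos (by linarith))).const_mul M
      have := (hpow (C₁/E₁) hδ₁pos).add h2
      simpa using this
    refine squeeze_zero (fun j => (hρpos j).le) (fun j => ?_) hb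
    have := (abs_le.1 (hS j)).2
    have haz : 0 < a * z j := mul_pos ha0 (hzpos j)
    nlinarith [hρdef j]
  -- θ := U / ρ ^ δ₂ → 0
  set θ : ℕ → ℝ := fun j => U j / (ρ j) ^ (C₂/E₂) with hθdef
  have hρpowpos : ∀ j, 0 < (ρ j) ^ (C₂/E₂) := fun j => Real.rpow_pos_of_pos (hρpos j) _
  have hθbound : ∀ j, |θ j| ≤ M * (ρ j) ^ ((C₂/E₂) * ε) := by
    intro j
    have h1 : |θ j| = |U j| / (ρ j) ^ (C₂/E₂) := by
      rw [hθdef, abs_div, abs_of_pos (hρpowpos j)]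
    rw [h1, div_le_iff₀ (hρpowpos j)]
    calc |U j| ≤ M * (ρ j) ^ ((C₂/E₂) * (1+ε)) := hU j
      _ = M * (ρ j) ^ ((C₂/E₂) * ε) * (ρ j) ^ (C₂/E₂) := by
          rw [mul_assoc, ← Real.rpow_add (hρpos j)]; ring_nf
  have hθlim : Tendsto θ atTop (𝓝 0) := by
    have hb : Tendsto (fun j => M * (ρ j) ^ ((C₂/E₂) * ε)) atTop (𝓝 0) := by
      have hc : ContinuousAt (fun x : ℝ => x ^ ((C₂/E₂) * ε)) 0 :=
        Real.continuousAt_rpow_const 0 _ (Or.inr (mul_pos hδ₂pos hε0).le)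
      have := (hc.tendsto.comp hρlim).const_mul M
      simpa [Real.zero_rpow (ne_of_gt (mul_pos hδ₂pos hε0))] using this
    have h0 : Tendsto (fun j => |θ j|) atTop (𝓝 0) :=
      squeeze_zero (fun j => abs_nonneg _) hθbound hb
    exact (tendsto_zero_iff_abs_tendsto_zero _).2 h0
  -- z (j+1) = ρ j ^ δ₂ * (1 + θ j), and 1 + θ j > 0
  have hzθ : ∀ j, z (j+1) = (ρ j) ^ (C₂/E₂) * (1 + θ j) := by
    intro j
    have hne := ne_of_gt (hρpowpos j)
    rw [hθdef, hzdef j]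
    field_simp
  have h1θpos : ∀ j, 0 < 1 + θ j := by
    intro j
    have h := hzpos (j+1)
    rw [hzθ j] at h
    by_contra hc
    push_neg at hc
    nlinarith [hρpowpos j]
  -- log ρ j ≠ 0 and log ρ → -∞
  have hlogρneg : ∀ j, Real.log (ρ j) < 0 := fun j =>
    Real.log_neg (hρpos j) (hρ01 j).2
  have hlogρbot : Tendsto (fun j => Real.log (ρ j)) atTop atBot := by
    refine Real.tendsto_log_nhdsGT_zero.comp ?_
    exact tendsto_nhdsWithin_of_tendsto_nhds_of_eventually_within _ hρlim
      (Eventually.of_forall fun j => hρpos j)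
  -- small term → 0
  have hlog1θ : Tendsto (fun j => Real.log (1 + θ j)) atTop (𝓝 0) := by
    have hc : ContinuousAt Real.log 1 := Real.continuousAt_log one_ne_zero
    have h1 : Tendsto (fun j => 1 + θ j) atTop (𝓝 1) := by
      simpa using tendsto_const_nhds.add hθlim
    simpa [Function.comp_def] using hc.tendsto.comp h1
  have hnum : Tendsto (fun j => Real.log a + Real.log (1 + θ j)) atTop
      (𝓝 (Real.log a)) := by
    simpa using (tendsto_const_nhds (x := Real.log a)).add hlog1θ
  have hsmall : Tendsto
      (fun j => (Real.log a + Real.log (1 + θ j)) / Real.log (ρ j))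
      atTop (𝓝 0) := by
    have hinv : Tendsto (fun j => (Real.log (ρ j))⁻¹) atTop (𝓝 0) := by
      have h1 : Tendsto (fun j => -Real.log (ρ j)) atTop atTop :=
        tendsto_neg_atBot_atTop.comp hlogρbot
      have := h1.inv_tendsto_atTop
      have h2 : Tendsto (fun j => -(-Real.log (ρ j))⁻¹) atTop (𝓝 (-0)) :=
        ((tendsto_neg_atBot_atTop.comp hlogρbot).inv_tendsto_atTop).neg
      simpa using h2
    have := hnum.mul hinv
    simpa [div_eq_mul_inv] using this
  -- ratio of logs → δ₂
  have hratio : Tendsto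
      (fun j => Real.log (a * z (j+1)) / Real.log (ρ j)) atTop (𝓝 (C₂/E₂)) := by
    have heq : ∀ j, Real.log (a * z (j+1)) / Real.log (ρ j)
        = C₂/E₂ + (Real.log a + Real.log (1 + θ j)) / Real.log (ρ j) := by
      intro j
      have hlogz : Real.log (z (j+1)) =
          (C₂/E₂) * Real.log (ρ j) + Real.log (1 + θ j) := by
        rw [hzθ j, Real.log_mul (ne_of_gt (hρpowpos j)) (ne_of_gt (h1θpos j)),
          Real.log_rpow (hρpos j)]
      rw [Real.log_mul (ne_of_gt ha0) (ne_of_gt (hzpos (j+1))), hlogz]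
      have hne := ne_of_lt (hlogρneg j)
      field_simp
      ring
    have : Tendsto (fun j => C₂/E₂ +
        (Real.log a + Real.log (1 + θ j)) / Real.log (ρ j)) atTop
        (𝓝 (C₂/E₂)) := by
      simpa using (tendsto_const_nhds (x := C₂/E₂)).add hsmall
    exact Tendsto.congr (fun j => (heq j).symm) this
  -- conclude
  rw [← tendsto_add_atTop_iff_nat 1]
  have heq2 : ∀ j : ℕ,
      (t (2*(j+1)+1) - t (2*(j+1))) / (t (2*(j+1)) - t (2*(j+1)-1))
      = (E₂/E₁) * (Real.log (a * z (j+1)) / Real.log (ρ j)) := by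
    intro j
    have h1 := htodd (j+1)
    have h2 := hteven j
    have e2 : 2*(j+1) = 2*j+2 := by ring
    have e3 : 2*(j+1)-1 = 2*j+1 := by omega
    rw [e2] at h1
    rw [e3, e2]
    rw [h1, h2, neg_mul, neg_mul, neg_div_neg_eq, mul_div_mul_comm]
    congr 1
    field_simp
  refine Tendsto.congr (fun j => (heq2 j).symm) ?_
  have := hratio.const_mul (E₂/E₁)
  have hval : (E₂/E₁) * (C₂/E₂) = C₂/E₁ := by field_simp
  rw [hval] at this
  exact this
end

section
/- With the hitting-times setup below and any real constants ω₁, ω₂ > 0, lim_{i→∞} [ω₁·(t_{2i+1} − t_{2i}) + ω₂·(t_{2i+2} − t_{2i+1})]/(t_{2i+2} − t_{2i}) = (ω₁ + γ₁·ω₂)/(γ₁ + 1). (Corollary 6.2(4).) -/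
open Real Filter Topology

/-- Hitting-times setup for an orbit in the basin of a Bykov attractor:
`z i` and `ρ i` are the height and radial coordinates of the successive hits
at the cross sections, and `t` is the sequence of hitting times. -/
theorem stmt_7
    (C₁ E₁ C₂ E₂ a ε M : ℝ)
    (hC₁ : C₁ > E₁) (hE₁ : E₁ > 0) (hC₂ : C₂ > E₂) (hE₂ : E₂ > 0)
    (ha : a ∈ Set.Ioo (0:ℝ) 1) (hε : ε ∈ Set.Ioo (0:ℝ) 1) (hM : M > 0)
    (z ρ S U t : ℕ → ℝ)
    (hz01 : ∀ i, z i ∈ Set.Ioo (0:ℝ) 1) (hρ01 : ∀ i, ρ i ∈ Set.Ioo (0:ℝ) 1)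
    (hzlim : Tendsto z atTop (𝓝 0))
    (hρdef : ∀ i, ρ i = (a * z i) ^ (C₁/E₁) + S i)
    (hS : ∀ i, |S i| ≤ M * (a * z i) ^ ((C₁/E₁) * (1+ε)))
    (hzdef : ∀ i, z (i+1) = (ρ i) ^ (C₂/E₂) + U i)
    (hU : ∀ i, |U i| ≤ M * (ρ i) ^ ((C₂/E₂) * (1+ε)))
    (ht0 : t 0 = 0)
    (htodd : ∀ i, t (2*i+1) - t (2*i) = -(1/E₁) * Real.log (a * z i))
    (hteven : ∀ i, t (2*i+2) - t (2*i+1) = -(1/E₂) * Real.log (ρ i))     (ω₁ ω₂ : ℝ) (hω₁ : ω₁ > 0) (hω₂ : ω₂ > 0) :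
    Tendsto (fun i => (ω₁ * (t (2*i+1) - t (2*i)) + ω₂ * (t (2*i+2) - t (2*i+1)))
        / (t (2*i+2) - t (2*i)))
      atTop (𝓝 ((ω₁ + (C₁/E₂) * ω₂) / (C₁/E₂ + 1))) := by
  obtain ⟨ha0, ha1⟩ := ha
  obtain ⟨hε0, hε1⟩ := hε
  have hE₁' : E₁ ≠ 0 := ne_of_gt hE₁
  have hE₂' : E₂ ≠ 0 := ne_of_gt hE₂
  set δ₁ : ℝ := C₁ / E₁ with hδ₁def
  have hC₁0 : 0 < C₁ := lt_trans hE₁ hC₁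
  have hδ₁pos : 0 < δ₁ := div_pos hC₁0 hE₁
  have haz : ∀ i, 0 < a * z i ∧ a * z i < 1 := fun i =>
    ⟨mul_pos ha0 (hz01 i).1, by nlinarith [(hz01 i).1, (hz01 i).2]⟩
  have hl : ∀ i, Real.log (a * z i) < 0 := fun i => Real.log_neg (haz i).1 (haz i).2
  have hl' : ∀ i, Real.log (a * z i) ≠ 0 := fun i => ne_of_lt (hl i)
  have hrneg : ∀ i, Real.log (ρ i) < 0 := fun i => Real.log_neg (hρ01 i).1 (hρ01 i).2
  set q : ℕ → ℝ := fun i => Real.log (ρ i) / Real.log (a * z i) with hqdef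
  have hqpos : ∀ i, 0 < q i := fun i => div_pos_of_neg_of_neg (hrneg i) (hl i)
  set e : ℕ → ℝ := fun i => S i / (a * z i) ^ δ₁ with hedef
  have hbase : ∀ i, (0:ℝ) < (a * z i) ^ δ₁ := fun i => Real.rpow_pos_of_pos (haz i).1 _
  have hρeq : ∀ i, ρ i = (a * z i) ^ δ₁ * (1 + e i) := by
    intro i
    rw [hρdef i]
    simp only [hedef]
    rw [mul_add, mul_one, mul_div_cancel₀ _ (ne_of_gt (hbase i))]
  have h1e : ∀ i, 0 < 1 + e i := by
    intro i
    have h := hρeq i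
    have := (hρ01 i).1
    nlinarith [hbase i]
  -- q i = δ₁ + log(1+e i)/log(a z i)
  have hqeq : ∀ i, q i = δ₁ + Real.log (1 + e i) * (Real.log (a * z i))⁻¹ := by
    intro i
    have hlog : Real.log (ρ i) = δ₁ * Real.log (a * z i) + Real.log (1 + e i) := by
      rw [hρeq i, Real.log_mul (ne_of_gt (hbase i)) (ne_of_gt (h1e i)),
        Real.log_rpow (haz i).1]
    simp only [hqdef, hlog, div_eq_mul_inv]
    rw [add_mul, mul_assoc, mul_inv_cancel₀ (hl' i), mul_one]
  -- limits
  have haz0 : Tendsto (fun i => a * z i) atTop (𝓝 0) := by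
    simpa using hzlim.const_mul a
  have hloginv : Tendsto (fun i => (Real.log (a * z i))⁻¹) atTop (𝓝 0) := by
    have hbot : Tendsto (fun i => Real.log (a * z i)) atTop atBot :=
      Real.tendsto_log_nhdsGT_zero.comp
        (tendsto_nhdsWithin_iff.2 ⟨haz0, Eventually.of_forall fun i => (haz i).1⟩)
    have htop : Tendsto (fun i => -Real.log (a * z i)) atTop atTop :=
      tendsto_neg_atBot_atTop.comp hbot
    have := htop.inv_tendsto_atTop
    have h2 : Tendsto (fun i => -(-Real.log (a * z i))⁻¹) atTop (𝓝 (-0)) := this.neg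
    simpa [inv_neg, neg_neg] using h2
  have he0 : Tendsto e atTop (𝓝 0) := by
    apply squeeze_zero_norm (a := fun i => M * (a * z i) ^ (δ₁ * ε))
    · intro i
      have hS' := hS i
      have hsplit : (a * z i) ^ (δ₁ * (1 + ε)) = (a * z i) ^ δ₁ * (a * z i) ^ (δ₁ * ε) := by
        rw [show δ₁ * (1 + ε) = δ₁ + δ₁ * ε by ring, Real.rpow_add (haz i).1]
      have : |e i| = |S i| / (a * z i) ^ δ₁ := by
        rw [hedef]; rw [abs_div, abs_of_pos (hbase i)]
      rw [Real.norm_eq_abs, this]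
      rw [div_le_iff₀ (hbase i)]
      calc |S i| ≤ M * (a * z i) ^ (δ₁ * (1 + ε)) := hS' |>.trans_eq (by rw [hδ₁def])
        _ = M * (a * z i) ^ (δ₁ * ε) * (a * z i) ^ δ₁ := by rw [hsplit]; ring
    · have hc : (0:ℝ) ≤ δ₁ * ε := le_of_lt (mul_pos hδ₁pos hε0)
      have hcont : ContinuousAt (fun x : ℝ => x ^ (δ₁ * ε)) 0 :=
        Real.continuousAt_rpow_const 0 _ (Or.inr hc)
      have := (hcont.tendsto.comp haz0).const_mul M
      have hz0 : (0:ℝ) ^ (δ₁ * ε) = 0 := Real.zero_rpow (ne_of_gt (mul_pos hδ₁pos hε0))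
      simpa [Function.comp, hz0] using this
  have hlog1e : Tendsto (fun i => Real.log (1 + e i)) atTop (𝓝 0) := by
    have h1 : Tendsto (fun i => 1 + e i) atTop (𝓝 1) := by
      simpa using he0.const_add 1
    have := (Real.continuousAt_log one_ne_zero).tendsto.comp h1
    simpa [Function.comp_def] using this
  have hqlim : Tendsto q atTop (𝓝 δ₁) := by
    have : Tendsto (fun i => δ₁ + Real.log (1 + e i) * (Real.log (a * z i))⁻¹)
        atTop (𝓝 (δ₁ + 0 * 0)) := (hlog1e.mul hloginv).const_add δ₁
    simpa [← hqeq] using this.congr fun i => (hqeq i).symm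
  -- main reduction
  have hDpos : ∀ i, 0 < 1 / E₁ + q i / E₂ := fun i =>
    add_pos (div_pos one_pos hE₁) (div_pos (hqpos i) hE₂)
  have key : ∀ i, (ω₁ * (t (2*i+1) - t (2*i)) + ω₂ * (t (2*i+2) - t (2*i+1)))
      / (t (2*i+2) - t (2*i))
      = (ω₁ / E₁ + ω₂ * q i / E₂) / (1 / E₁ + q i / E₂) := by
    intro i
    have hsum : t (2*i+2) - t (2*i) = (t (2*i+2) - t (2*i+1)) + (t (2*i+1) - t (2*i)) := by
      ring
    have hrq : Real.log (ρ i) = q i * Real.log (a * z i) :=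
      (div_mul_cancel₀ _ (hl' i)).symm
    rw [hsum, htodd i, hteven i, hrq]
    set l := Real.log (a * z i) with hldef
    have hlneg : l < 0 := hl i
    have hBpos : 0 < -(1/E₂) * (q i * l) + -(1/E₁) * l := by
      have h1 : 0 < -(1/E₂) * (q i * l) := by
        have : q i * l < 0 := mul_neg_of_pos_of_neg (hqpos i) hlneg
        nlinarith [div_pos one_pos hE₂]
      have h2 : 0 < -(1/E₁) * l := by nlinarith [div_pos one_pos hE₁]
      linarith
    rw [div_eq_div_iff (ne_of_gt hBpos) (ne_of_gt (hDpos i))]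
    field_simp
    ring
  have hnum : Tendsto (fun i => ω₁ / E₁ + ω₂ * q i / E₂) atTop
      (𝓝 (ω₁ / E₁ + ω₂ * δ₁ / E₂)) :=
    (((hqlim.const_mul ω₂).div_const E₂).const_add (ω₁ / E₁))
  have hden : Tendsto (fun i => 1 / E₁ + q i / E₂) atTop (𝓝 (1 / E₁ + δ₁ / E₂)) :=
    ((hqlim.div_const E₂).const_add (1 / E₁))
  have hdenpos : 0 < 1 / E₁ + δ₁ / E₂ :=
    add_pos (div_pos one_pos hE₁) (div_pos hδ₁pos hE₂)
  have hmain : Tendsto (fun i => (ω₁ / E₁ + ω₂ * q i / E₂) / (1 / E₁ + q i / E₂)) atTop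
      (𝓝 ((ω₁ / E₁ + ω₂ * δ₁ / E₂) / (1 / E₁ + δ₁ / E₂))) :=
    hnum.div hden (ne_of_gt hdenpos)
  have hval : (ω₁ / E₁ + ω₂ * δ₁ / E₂) / (1 / E₁ + δ₁ / E₂)
      = (ω₁ + (C₁/E₂) * ω₂) / (C₁/E₂ + 1) := by
    have h1 : ω₁ / E₁ + ω₂ * δ₁ / E₂ = (1 / E₁) * (ω₁ + (C₁/E₂) * ω₂) := by
      rw [hδ₁def]; field_simp
    have h2 : 1 / E₁ + δ₁ / E₂ = (1 / E₁) * (C₁/E₂ + 1) := by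
      rw [hδ₁def]; field_simp; ring
    rw [h1, h2, mul_div_mul_left _ _ (by positivity : (1:ℝ)/E₁ ≠ 0)]
  rw [← hval]
  exact hmain.congr fun i => (key i).symm
end

section
/- In the adjusted-times setup below, assume that ∑_{i=1}^∞ i·|R_i| < ∞. Let T̃₀ := T₀ + ∑_{j=1}^∞ R_j/δ^j and define the sequence (T̃_i)_{i≥0} by T̃_i = δ·T̃_{i−1} + c for i ≥ 1. Then, for every i ≥ 0, |T_i − T̃_i| ≤ ∑_{j=i+1}^∞ |R_j|; consequently the series ∑_{i=0}^∞ |T_i − T̃_i| converges (it is bounded by ∑_{i=1}^∞ i·|R_i|), and in particular lim_{i→∞} (T_i − T̃_i) = 0. (Lemma 8.2.) -/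
set_option maxHeartbeats 1000000


open Real Filter Topology

/-- Adjusted-times setup (Lemma 8.2): with `R i = T i - δ·T (i-1) - c` for `i ≥ 1`,
assuming `∑ i·|R i| < ∞`, the adjusted sequence `T̃` defined by
`T̃ 0 = T 0 + ∑_{j≥1} R j / δ^j` and `T̃ i = δ·T̃ (i-1) + c` satisfies
`|T i - T̃ i| ≤ ∑_{j>i} |R j|`, the series `∑ |T i - T̃ i|` converges and is
bounded by `∑ i·|R i|`, and in particular `T i - T̃ i → 0`. -/
theorem stmt_11
    (δ c : ℝ) (hδ : δ > 1) (T : ℕ → ℝ)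
    (hR : Summable (fun i : ℕ => ((i:ℝ)+1) * |T (i+1) - δ * T i - c|))
    (Ttil : ℕ → ℝ)
    (hTtil0 : Ttil 0 = T 0 + ∑' j : ℕ, (T (j+1) - δ * T j - c) / δ^(j+1))
    (hTtilrec : ∀ i : ℕ, Ttil (i+1) = δ * Ttil i + c) :
    (∀ i : ℕ, |T i - Ttil i| ≤ ∑' k : ℕ, |T (i+k+1) - δ * T (i+k) - c|) ∧
    Summable (fun i : ℕ => |T i - Ttil i|) ∧
    (∑' i : ℕ, |T i - Ttil i|) ≤ ∑' i : ℕ, ((i:ℝ)+1) * |T (i+1) - δ * T i - c| ∧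
    Tendsto (fun i => T i - Ttil i) atTop (𝓝 0) := by

  set R : ℕ → ℝ := fun j => T (j+1) - δ * T j - c with hRdef
  have ha0 : ∀ j, (0:ℝ) ≤ |R j| := fun j => abs_nonneg _
  have hδ0 : (0:ℝ) < δ := lt_trans one_pos hδ
  have hδk : ∀ k : ℕ, (1:ℝ) ≤ δ ^ k := fun k => one_le_pow₀ hδ.le
  have haSumm : Summable (fun j => |R j|) :=
    hR.of_nonneg_of_le ha0 (fun i => le_mul_of_one_le_left (ha0 i)
      (by have := Nat.cast_nonneg (α := ℝ) i; linarith))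
  have haTail : ∀ i, Summable (fun k => |R (i+k)|) := by
    intro i
    have := (summable_nat_add_iff i).mpr haSumm
    simpa [add_comm] using this
  have hRdiv : ∀ i, Summable (fun k => R (i+k) / δ^(k+1)) := by
    intro i
    refine Summable.of_norm_bounded (haTail i) (fun k => ?_)
    rw [Real.norm_eq_abs, abs_div, abs_of_pos (pow_pos hδ0 (k+1))]
    exact div_le_self (ha0 _) (hδk (k+1))
  have hD : ∀ i, T i - Ttil i = -∑' k, R (i+k) / δ^(k+1) := by
    intro i
    induction i with
    | zero =>
      rw [hTtil0]
      have he : (fun k : ℕ => R (0+k) / δ^(k+1)) = fun j : ℕ => R j / δ^(j+1) := by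
        funext k; norm_num
      rw [show (∑' k : ℕ, R (0+k) / δ^(k+1)) = ∑' j : ℕ, R j / δ^(j+1) from by rw [he]]
      ring
    | succ i ih =>
      have h1 : T (i+1) - Ttil (i+1) = δ * (T i - Ttil i) + R i := by
        rw [hTtilrec]; simp only [R]; ring
      have h2 : (∑' k, R (i+k) / δ^(k+1)) = R i / δ + ∑' k, R (i+(k+1)) / δ^(k+2) := by
        have := Summable.tsum_eq_zero_add (hRdiv i)
        simpa using this
      have h3 : (fun k => R (i+(k+1)) / δ^(k+2)) = fun k => (R (i+1+k) / δ^(k+1)) / δ := by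
        funext k
        have : i + (k+1) = i+1+k := by omega
        rw [this, pow_succ]
        ring
      rw [h1, ih, h2, h3, tsum_div_const]
      field_simp
      ring
  have habs : ∀ i, |T i - Ttil i| ≤ ∑' k, |R (i+k)| := by
    intro i
    rw [hD i, abs_neg]
    calc |∑' k, R (i+k) / δ^(k+1)| ≤ ∑' k, |R (i+k) / δ^(k+1)| := by
          have h0 : Summable fun k => ‖R (i+k) / δ^(k+1)‖ := by
            simpa only [Real.norm_eq_abs] using (hRdiv i).abs
          have := norm_tsum_le_tsum_norm (f := fun k => R (i+k) / δ^(k+1)) h0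
          simpa only [Real.norm_eq_abs] using this
      _ ≤ ∑' k, |R (i+k)| := by
          refine Summable.tsum_le_tsum (fun k => ?_) (hRdiv i).abs (haTail i)
          rw [abs_div, abs_of_pos (pow_pos hδ0 (k+1))]
          exact div_le_self (ha0 _) (hδk (k+1))
  -- tail sums
  set tail : ℕ → ℝ := fun i => ∑' k, |R (i+k)| with htaildef
  have htail0 : ∀ i, 0 ≤ tail i := fun i => tsum_nonneg (fun k => ha0 _)
  have htailrec : ∀ i, tail i = |R i| + tail (i+1) := by
    intro i
    show (∑' k, |R (i+k)|) = |R i| + ∑' k, |R (i+1+k)|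
    rw [Summable.tsum_eq_zero_add (haTail i)]
    congr 1
    exact tsum_congr fun k => by rw [show i+(k+1) = i+1+k from by omega]
  set C : ℝ := ∑' i : ℕ, ((i:ℝ)+1) * |R i| with hCdef
  have hG : ∀ N : ℕ, ∑ i ∈ Finset.range N, tail i
      = ∑ j ∈ Finset.range N, ((j:ℝ)+1) * |R j| + N * tail N := by
    intro N
    induction N with
    | zero => simp
    | succ N ih =>
      rw [Finset.sum_range_succ, Finset.sum_range_succ, ih, htailrec N]
      push_cast
      ring
  have hshift : ∀ N : ℕ, Summable (fun k => (((N+k:ℕ):ℝ)+1) * |R (N+k)|) := by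
    intro N
    have := (summable_nat_add_iff N).mpr hR
    simpa [add_comm] using this
  have hbound : ∀ N : ℕ, ∑ i ∈ Finset.range N, tail i ≤ C := by
    intro N
    rw [hG N]
    have h1 : (N:ℝ) * tail N ≤ ∑' k, (((N+k:ℕ):ℝ)+1) * |R (N+k)| := by
      show (N:ℝ) * ∑' k, |R (N+k)| ≤ _
      rw [← tsum_mul_left]
      refine Summable.tsum_le_tsum (fun k => ?_) ((haTail N).mul_left _) (hshift N)
      apply mul_le_mul_of_nonneg_right _ (ha0 _)
      push_cast; linarith [Nat.cast_nonneg (α := ℝ) k]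
    have h2 : ∑ j ∈ Finset.range N, ((j:ℝ)+1) * |R j| + ∑' k, (((N+k:ℕ):ℝ)+1) * |R (N+k)| = C := by
      rw [hCdef]
      have := Summable.sum_add_tsum_nat_add N hR
      simpa [add_comm] using this
    linarith
  have htailSumm : Summable tail := summable_of_sum_range_le htail0 hbound
  have htailsum_le : ∑' i, tail i ≤ C := tsum_le_of_sum_range_le htail0 hbound
  have hSumD : Summable (fun i => |T i - Ttil i|) :=
    htailSumm.of_nonneg_of_le (fun i => abs_nonneg _) habs
  refine ⟨habs, hSumD, ?_, ?_⟩
  · exact le_trans (Summable.tsum_le_tsum habs hSumD htailSumm) htailsum_le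
  · have : Summable (fun i => T i - Ttil i) := hSumD.of_abs
    exact this.tendsto_atTop_zero
end

section
/- In the adjusted-times setup below, assume that ∑_{i=1}^∞ |R_i| < ∞, and let T̃₀ := T₀ + ∑_{j=1}^∞ R_j/δ^j. Then for every N ≥ 0 the shifted limit lim_{i→∞} (T_{i+N} − ((δ^i − 1)/(δ − 1))·c)/δ^i exists and equals δ^N·T̃₀ + ((δ^N − 1)/(δ − 1))·c, i.e. it equals T̃_N, the N-th term of the sequence defined by T̃_i = δ·T̃_{i−1} + c. (Lemma 8.4: the construction of the adjusted times does not depend on where along the orbit one starts.) -/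
open Real Filter Topology

/-- Lemma 8.4: the construction of the adjusted times does not depend on where
along the orbit one starts. With `R i = T i - δ·T (i-1) - c` summable and
`T̃₀ = T 0 + ∑_{j≥1} R j / δ^j`, for every `N ≥ 0` the shifted limit
`lim_i (T (i+N) - ((δ^i-1)/(δ-1))·c)/δ^i` exists and equals
`δ^N·T̃₀ + ((δ^N-1)/(δ-1))·c`, i.e. the `N`-th term of the sequence
`T̃ i = δ·T̃ (i-1) + c`. -/
theorem stmt_12
    (δ c : ℝ) (hδ : δ > 1) (T : ℕ → ℝ)
    (hR : Summable (fun i : ℕ => |T (i+1) - δ * T i - c|)) :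
    ∀ N : ℕ,
      Tendsto (fun i : ℕ => (T (i+N) - ((δ^i - 1)/(δ - 1)) * c) / δ^i) atTop
        (𝓝 (δ^N * (T 0 + ∑' j : ℕ, (T (j+1) - δ * T j - c) / δ^(j+1))
              + ((δ^N - 1)/(δ - 1)) * c)) := by
  have hδ0 : (0:ℝ) < δ := by linarith
  have hδ1 : δ - 1 ≠ 0 := by intro h; linarith
  have hpow0 : ∀ j : ℕ, (δ:ℝ)^j ≠ 0 := fun j => (pow_pos hδ0 j).ne'
  have hpow1 : ∀ j : ℕ, (1:ℝ) ≤ δ ^ j := fun j => one_le_pow₀ hδ.le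
  set R : ℕ → ℝ := fun j => T (j+1) - δ * T j - c with hRdef
  have hsum : Summable (fun j : ℕ => R j / δ^(j+1)) := by
    apply Summable.of_norm_bounded hR
    intro j
    rw [norm_div, Real.norm_eq_abs, Real.norm_eq_abs, abs_of_pos (pow_pos hδ0 _)]
    exact div_le_self (abs_nonneg _) (hpow1 _)
  set S : ℕ → ℝ := fun i => (T i - ((δ^i - 1)/(δ - 1)) * c) / δ^i with hSdef
  have hS : ∀ i, S i = T 0 + ∑ j ∈ Finset.range i, R j / δ^(j+1) := by
    intro i
    induction i with
    | zero => simp [hSdef]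
    | succ n ih =>
      rw [Finset.sum_range_succ, ← add_assoc, ← ih]
      simp only [hSdef, hRdef]
      field_simp
      ring
  have key : Tendsto S atTop (𝓝 (T 0 + ∑' j : ℕ, R j / δ^(j+1))) := by
    exact ((tendsto_const_nhds (x := T 0)).add hsum.hasSum.tendsto_sum_nat).congr
      fun i => (hS i).symm
  intro N
  have h1 : Tendsto (fun i => δ^N * S (i+N) + ((δ^N - 1)/(δ - 1)) * c) atTop
      (𝓝 (δ^N * (T 0 + ∑' j : ℕ, R j / δ^(j+1)) + ((δ^N - 1)/(δ - 1)) * c)) := by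
    exact ((tendsto_const_nhds.mul (key.comp (tendsto_add_atTop_nat N))).add tendsto_const_nhds)
  refine h1.congr fun i => ?_
  simp only [hSdef]
  rw [pow_add]
  field_simp
  ring
end
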